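/- Let p = 3r + 2 be an odd prime (so r is odd) and k of characteristic p. The polynomial x^{2r+1}(x^4 + 1)^{2r+1} over k has zero coefficient at x^{np-1} for every positive integer n; likewise x^{r+i}(x^4+1)^r has zero coefficient at x^{np-1} for i = 0, 1, 2 and all n ≥ 1. -/
import Mathlib


open Polynomial

lemma stmt18_key {k : Type*} [Field k] (a b m : ℕ) (ham : a ≤ m)
    (h : ¬ (4 ∣ (m - a)) ∨ 4 * b < m - a) :
    ((X ^ a * (X ^ 4 + 1) ^ b : k[X])).coeff m = 0 := by
  obtain ⟨d, rfl⟩ := Nat.exists_eq_add_of_le ham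
  have hexp : ((X ^ 4 + 1 : k[X]) ^ b) = expand k 4 ((X + 1) ^ b) := by
    rw [map_pow, map_add, expand_X, map_one]
  rw [add_comm a d, coeff_X_pow_mul, hexp, coeff_expand (by norm_num)]
  have hd : a + d - a = d := by omega
  rw [hd] at h
  rcases h with h | h
  · simp [h]
  · split_ifs with h4
    · apply coeff_eq_zero_of_natDegree_lt
      have hle : ((X + 1 : k[X]) ^ b).natDegree ≤ b := by
        refine le_trans (natDegree_pow_le) ?_
        have : (X + 1 : k[X]).natDegree ≤ 1 := by
          simpa using natDegree_add_le (X : k[X]) 1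
        nlinarith
      obtain ⟨c, rfl⟩ := h4
      rw [Nat.mul_div_cancel_left c (by norm_num)]
      omega
    · rfl

/-- `p = 3r + 2` an odd prime (so `r` is odd), `k` of characteristic `p`.
The polynomial `x^{2r+1}(x⁴+1)^{2r+1}` has zero coefficient at `x^{np-1}` for every `n ≥ 1`;
likewise `x^{r+i}(x⁴+1)^r` for `i = 0, 1, 2` and all `n ≥ 1`. -/
theorem stmt18 {k : Type*} [Field k] (p r : ℕ) [Fact p.Prime] [CharP k p]
    (hp : p = 3 * r + 2) (hodd : Odd p) :
    (∀ n : ℕ, 1 ≤ n →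
        ((X ^ (2 * r + 1) * (X ^ 4 + 1) ^ (2 * r + 1) : k[X])).coeff (n * p - 1) = 0) ∧
      ∀ i : ℕ, i ≤ 2 → ∀ n : ℕ, 1 ≤ n →
        ((X ^ (r + i) * (X ^ 4 + 1) ^ r : k[X])).coeff (n * p - 1) = 0 := by
  obtain ⟨m, hm⟩ := hodd
  have hr : r % 2 = 1 := by omega
  subst hp
  constructor
  · intro n hn
    have hle : (3 * r + 2) ≤ n * (3 * r + 2) := Nat.le_mul_of_pos_left _ hn
    apply stmt18_key
    · omega
    · rcases Nat.lt_or_ge n 4 with h | h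
      · interval_cases n <;> [left; left; left] <;> omega
      · right
        have := Nat.mul_le_mul_right (3 * r + 2) h
        omega
  · intro i hi n hn
    have hle : (3 * r + 2) ≤ n * (3 * r + 2) := Nat.le_mul_of_pos_left _ hn
    apply stmt18_key
    · omega
    · rcases Nat.lt_or_ge n 2 with h | h
      · interval_cases n
        left; omega
      · right
        have := Nat.mul_le_mul_right (3 * r + 2) h
        omega
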